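/- There exists a countably infinite, locally finite graph G and an i.i.d. uniform {-1,+1} initial opinion assignment such that, almost surely, the opinion sequence of some vertex does not converge to a cycle of period at most two: specifically, in the graph with levels L_0, L_1, L_2, ... where |L_n| = 2^n - 1 and each vertex of L_n is adjacent to all vertices of L_{n-1}, L_n, and L_{n+1}, all vertices in a level share the same opinion from time 1 on, x_{L_n}(t) = x_{L_{n+1}}(t-1) for t ≥ 2, and hence x_{L_0}(t) = x_{L_{t+1}}(1); since {x_{L_{3n}}(1)} are i.i.d. uniform, x_{L_0}(t) almost surely fails to be eventually 2-periodic. -/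

import Mathlib

open MeasureTheory ProbabilityTheory Finset
open scoped ENNReal

set_option linter.unusedSectionVars false

namespace MajorityCE

def start : ℕ → ℕ
  | 0 => 0
  | n+1 => 3 * start n + 1

lemma start_succ (n : ℕ) : start (n+1) = 3 * start n + 1 := rfl

lemma start_strictMono : StrictMono start :=
  strictMono_nat_of_lt_succ fun n => by rw [start_succ]; omega

lemma start_mono : Monotone start := start_strictMono.monotone

lemma le_start (n : ℕ) : n ≤ start n := by
  induction n with
  | zero => simp [start]
  | succ n ih => rw [start_succ]; omega

lemma lv_exists (v : ℕ) : ∃ n, v < start (n+1) :=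
  ⟨v, lt_of_lt_of_le (Nat.lt_succ_self v) (le_start (v+1))⟩

def lv (v : ℕ) : ℕ := Nat.find (lv_exists v)

lemma lv_spec (v : ℕ) : v < start (lv v + 1) := Nat.find_spec (lv_exists v)

lemma start_lv_le (v : ℕ) : start (lv v) ≤ v := by
  rcases h : lv v with _ | m
  · simp [start]
  · have := Nat.find_min (lv_exists v) (by omega : m < lv v)
    omega

lemma start_le_iff {m v : ℕ} : start m ≤ v ↔ m ≤ lv v := by
  constructor
  · intro h
    by_contra hc
    push_neg at hc
    have : start (lv v + 1) ≤ start m := start_mono (by omega)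
    have := lv_spec v
    omega
  · intro h
    exact le_trans (start_mono h) (start_lv_le v)

lemma lt_start_iff {m v : ℕ} : v < start m ↔ lv v < m := by
  rw [← not_le, ← not_le, start_le_iff]

lemma lv_eq_iff {v n : ℕ} : lv v = n ↔ start n ≤ v ∧ v < start (n+1) := by
  rw [start_le_iff, lt_start_iff]; omega

lemma lv_start (n : ℕ) : lv (start n) = n :=
  lv_eq_iff.2 ⟨le_rfl, start_strictMono (Nat.lt_succ_self n)⟩

lemma lv_pos {v : ℕ} (hv : v ≠ 0) : 1 ≤ lv v := by
  rw [← start_le_iff]; have : start 1 = 1 := rfl; omega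

def B (n : ℕ) : Finset ℕ := Finset.Ico (start (n-1)) (start (n+2))

lemma mem_B {u n : ℕ} : u ∈ B n ↔ n - 1 ≤ lv u ∧ lv u ≤ n + 1 := by
  rw [B, Finset.mem_Ico, start_le_iff, lt_start_iff]
  omega

def Nb (v : ℕ) : Finset ℕ := if v = 0 then Finset.Ico 1 4 else B (lv v)

lemma mem_Ico14 {u : ℕ} : u ∈ Finset.Ico 1 4 ↔ lv u = 1 := by
  have h1 : start 1 = 1 := rfl
  have h2 : start 2 = 4 := rfl
  rw [Finset.mem_Ico, lv_eq_iff, h1, h2]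

lemma Nb_symm (u v : ℕ) (huv : u ≠ v) : u ∈ Nb v ↔ v ∈ Nb u := by
  rcases eq_or_ne v 0 with rfl | hv
  · rcases eq_or_ne u 0 with rfl | hu
    · simp
    · rw [Nb, Nb, if_pos rfl, if_neg hu, mem_Ico14, mem_B]
      have := lv_pos hu
      have : lv 0 = 0 := by rw [lv_eq_iff]; simp [start]
      omega
  · rcases eq_or_ne u 0 with rfl | hu
    · rw [Nb, Nb, if_pos rfl, if_neg hv, mem_Ico14, mem_B]
      have := lv_pos hv
      have : lv 0 = 0 := by rw [lv_eq_iff]; simp [start]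
      omega
    · rw [Nb, Nb, if_neg hv, if_neg hu, mem_B, mem_B]
      have := lv_pos hv
      have := lv_pos hu
      omega

lemma card_B_odd {n : ℕ} (hn : 1 ≤ n) : Odd (B n).card := by
  obtain ⟨m, rfl⟩ : ∃ m, n = m + 1 := ⟨n - 1, by omega⟩
  rw [B, Nat.card_Ico]
  have h3 : start (m+1+2) = 27 * start m + 13 := by
    rw [start_succ, start_succ, start_succ]; ring
  simp only [Nat.add_sub_cancel]
  exact ⟨13 * start m + 6, by omega⟩

lemma card_Nb_odd (v : ℕ) : Odd (Nb v).card := by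
  rcases eq_or_ne v 0 with rfl | hv
  · rw [Nb, if_pos rfl]; decide
  · rw [Nb, if_neg hv]; exact card_B_odd (lv_pos hv)


lemma start_zero : start 0 = 0 := rfl
lemma B_def (n : ℕ) : B n = Finset.Ico (start (n-1)) (start (n+2)) := rfl
lemma Nb_def (v : ℕ) : Nb v = if v = 0 then Finset.Ico 1 4 else B (lv v) := rfl

section Dynamics

variable {Ω : Type} (X : ℕ → Ω → ℤ) (x : ℕ → ℕ → Ω → ℤ)
  (hx0 : ∀ (v : ℕ) (ω : Ω), x 0 v ω = X v ω)
  (hxs : ∀ (t v : ℕ) (ω : Ω), x (t + 1) v ω = Int.sign (∑ u ∈ Nb v, x t u ω))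
  (ω : Ω) (hω : ∀ v, X v ω = 1 ∨ X v ω = -1)

include hx0 hxs hω

/-- all values are ±1 -/
lemma values : ∀ t v, x t v ω = 1 ∨ x t v ω = -1 := by
  intro t
  induction t with
  | zero => intro v; rw [hx0]; exact hω v
  | succ t ih =>
    intro v
    rw [hxs]
    have hmod : (∑ u ∈ Nb v, x t u ω) % 2 = 1 := by
      rw [Finset.sum_int_mod]
      have : ∀ u ∈ Nb v, x t u ω % 2 = 1 := by
        intro u _
        rcases ih u with h | h <;> rw [h] <;> decide
      rw [Finset.sum_congr rfl this, Finset.sum_const, nsmul_eq_mul, mul_one]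
      have := card_Nb_odd v
      obtain ⟨k, hk⟩ := this
      rw [hk]
      push_cast
      omega
    have hne : (∑ u ∈ Nb v, x t u ω) ≠ 0 := by intro h; rw [h] at hmod; simp at hmod
    rcases lt_trichotomy (∑ u ∈ Nb v, x t u ω) 0 with h | h | h
    · right; exact Int.sign_eq_neg_one_of_neg h
    · exact absurd h hne
    · left; exact Int.sign_eq_one_of_pos h

/-- unanimity within a level (times ≥ 1) -/
lemma unan : ∀ t u, u ≠ 0 → x (t+1) u ω = x (t+1) (start (lv u)) ω := by
  intro t u hu
  have h1 : 1 ≤ lv u := lv_pos hu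
  have hs0 : start (lv u) ≠ 0 := by
    have : start 1 ≤ start (lv u) := start_mono h1
    have : start 1 = 1 := by rw [show (1:ℕ) = 0 + 1 from rfl, start_succ, start_zero]
    omega
  rw [hxs, hxs, Nb_def, Nb_def, if_neg hu, if_neg hs0, lv_start]

/-- sum over a level -/
lemma level_sum (t n : ℕ) (hn : 1 ≤ n) :
    ∑ u ∈ Finset.Ico (start n) (start (n+1)), x (t+1) u ω
      = ((start (n+1) - start n : ℕ) : ℤ) * x (t+1) (start n) ω := by
  have : ∀ u ∈ Finset.Ico (start n) (start (n+1)), x (t+1) u ω = x (t+1) (start n) ω := by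
    intro u hu
    rw [Finset.mem_Ico] at hu
    have hu0 : u ≠ 0 := by
      have : start 1 ≤ start n := start_mono hn
      have : start 1 = 1 := by rw [show (1:ℕ) = 0 + 1 from rfl, start_succ, start_zero]
      omega
    have hlv : lv u = n := lv_eq_iff.2 hu
    rw [unan X x hx0 hxs ω hω t u hu0, hlv]
  rw [Finset.sum_congr rfl this, Finset.sum_const, nsmul_eq_mul, Nat.card_Ico]

/-- domination: level n copies level n+1 -/
lemma dom (t n : ℕ) (hn : 1 ≤ n) :
    x (t+2) (start n) ω = x (t+1) (start (n+1)) ω := by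
  have hs0 : start n ≠ 0 := by
    have h1 : start 1 ≤ start n := start_mono hn
    have : start 1 = 1 := by rw [show (1:ℕ) = 0 + 1 from rfl, start_succ, start_zero]
    omega
  rw [show t + 2 = (t+1) + 1 from rfl, hxs, Nb_def, if_neg hs0, lv_start, B_def]
  have hm1 : start (n-1) ≤ start n := start_mono (by omega)
  have hm2 : start n ≤ start (n+1) := start_mono (by omega)
  have hm3 : start (n+1) ≤ start (n+2) := start_mono (by omega)
  rw [← Finset.sum_Ico_consecutive _ hm1 (le_trans hm2 hm3),
      ← Finset.sum_Ico_consecutive _ hm2 hm3]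
  set S1 := ∑ u ∈ Finset.Ico (start (n-1)) (start n), x (t+1) u ω with hS1
  set S2 := ∑ u ∈ Finset.Ico (start n) (start (n+1)), x (t+1) u ω with hS2
  have hb1 : |S1| ≤ ((start n - start (n-1) : ℕ) : ℤ) := by
    calc |S1| ≤ ∑ u ∈ Finset.Ico (start (n-1)) (start n), |x (t+1) u ω| :=
          Finset.abs_sum_le_sum_abs _ _
      _ ≤ ∑ _u ∈ Finset.Ico (start (n-1)) (start n), 1 := by
          apply Finset.sum_le_sum
          intro u _
          rcases values X x hx0 hxs ω hω (t+1) u with h | h <;> rw [h] <;> decide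
      _ = ((start n - start (n-1) : ℕ) : ℤ) := by
          rw [Finset.sum_const, nsmul_eq_mul, mul_one, Nat.card_Ico]
  have hb2 : |S2| ≤ ((start (n+1) - start n : ℕ) : ℤ) := by
    calc |S2| ≤ ∑ u ∈ Finset.Ico (start n) (start (n+1)), |x (t+1) u ω| :=
          Finset.abs_sum_le_sum_abs _ _
      _ ≤ ∑ _u ∈ Finset.Ico (start n) (start (n+1)), 1 := by
          apply Finset.sum_le_sum
          intro u _
          rcases values X x hx0 hxs ω hω (t+1) u with h | h <;> rw [h] <;> decide
      _ = ((start (n+1) - start n : ℕ) : ℤ) := by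
          rw [Finset.sum_const, nsmul_eq_mul, mul_one, Nat.card_Ico]
  rw [level_sum X x hx0 hxs ω hω t (n+1) (by omega)]
  set y := x (t+1) (start (n+1)) ω with hy
  have hcard : ((start (n+2) - start (n+1) : ℕ) : ℤ) = 2 * (start (n+1) : ℤ) + 1 := by
    have h : start (n+2) = 3 * start (n+1) + 1 := start_succ (n+1)
    omega
  have hb1' := abs_le.mp hb1
  have hb2' := abs_le.mp hb2
  rw [Nat.cast_sub hm1] at hb1'
  rw [Nat.cast_sub hm2] at hb2'
  have hnn : (0:ℤ) ≤ (start (n-1) : ℤ) := Nat.cast_nonneg _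
  rcases values X x hx0 hxs ω hω (t+1) (start (n+1)) with h | h
  · rw [← hy] at h
    rw [h]
    apply Int.sign_eq_one_of_pos
    rw [hcard]
    omega
  · rw [← hy] at h
    rw [h]
    apply Int.sign_eq_neg_one_of_neg
    rw [hcard]
    omega

/-- vertex 0 copies level 1 -/
lemma dom0 (t : ℕ) : x (t+2) 0 ω = x (t+1) (start 1) ω := by
  rw [show t + 2 = (t+1) + 1 from rfl, hxs, Nb_def, if_pos rfl]
  have h1 : start 1 = 1 := by rw [show (1:ℕ) = 0 + 1 from rfl, start_succ, start_zero]
  have h2 : start 2 = 4 := by rw [show (2:ℕ) = 1 + 1 from rfl, start_succ, h1]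
  have : Finset.Ico 1 4 = Finset.Ico (start 1) (start (1+1)) := by rw [h1, h2]
  rw [this, level_sum X x hx0 hxs ω hω t 1 le_rfl, h1, h2]
  rcases values X x hx0 hxs ω hω (t+1) (start 1) with h | h <;> rw [h1] at h <;> rw [h]
  · apply Int.sign_eq_one_of_pos; norm_num
  · apply Int.sign_eq_neg_one_of_neg; norm_num

/-- chain down to time 1 -/
lemma chain : ∀ k n, 1 ≤ n → x (k+1) (start n) ω = x 1 (start (n+k)) ω := by
  intro k
  induction k with
  | zero => intro n _; rfl
  | succ k ih =>
    intro n hn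
    rw [show k + 1 + 1 = k + 2 from rfl, dom X x hx0 hxs ω hω k n hn,
        ih (n+1) (by omega)]
    congr 2
    omega

lemma vertex0_eq (t : ℕ) : x (t+2) 0 ω = x 1 (start (t+1)) ω := by
  rw [dom0 X x hx0 hxs ω hω t, chain X x hx0 hxs ω hω t 1 le_rfl, Nat.add_comm]

lemma time1_eq (m : ℕ) (hm : 1 ≤ m) :
    x 1 (start m) ω = Int.sign (∑ u ∈ B m, X u ω) := by
  have hs0 : start m ≠ 0 := by
    have h1 : start 1 ≤ start m := start_mono hm
    have : start 1 = 1 := by rw [show (1:ℕ) = 0 + 1 from rfl, start_succ, start_zero]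
    omega
  rw [show (1:ℕ) = 0 + 1 from rfl, hxs, Nb_def, if_neg hs0, lv_start]
  congr 1
  exact Finset.sum_congr rfl fun u _ => hx0 u ω

end Dynamics

section Prob

variable {Ω : Type} [mΩ : MeasurableSpace Ω] {μ : Measure Ω} [IsProbabilityMeasure μ]
  {X : ℕ → Ω → ℤ}
  (hXm : ∀ v, Measurable (X v))
  (hXi : iIndepFun X μ)
  (hXu : ∀ v : ℕ, μ (X v ⁻¹' {1}) = 1 / 2 ∧ μ (X v ⁻¹' {-1}) = 1 / 2)

/-- atom event -/
def atom (X : ℕ → Ω → ℤ) (s A : Finset ℕ) : Set Ω :=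
  {ω | ∀ v ∈ s, X v ω = if v ∈ A then 1 else -1}

/-- sign event -/
def Gev (X : ℕ → Ω → ℤ) (s : Finset ℕ) (c : ℤ) : Set Ω :=
  {ω | (∀ v ∈ s, X v ω = 1 ∨ X v ω = -1) ∧ Int.sign (∑ v ∈ s, X v ω) = c}

lemma atom_eq (s A : Finset ℕ) :
    atom X s A = ⋂ v ∈ s, X v ⁻¹' {if v ∈ A then 1 else -1} := by
  ext ω; simp [atom]

include hXi hXu in
lemma atom_meas (s A : Finset ℕ) : μ (atom X s A) = (2⁻¹ : ℝ≥0∞) ^ s.card := by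
  rw [atom_eq, hXi.meas_biInter (fun v _ => ⟨{if v ∈ A then 1 else -1},
    measurableSet_singleton _, rfl⟩)]
  rw [Finset.prod_congr rfl (g := fun _ => (2⁻¹ : ℝ≥0∞)) (fun v _ => by
    by_cases h : v ∈ A <;> simp only [h, if_true, if_false]
    · rw [(hXu v).1, one_div]
    · rw [(hXu v).2, one_div])]
  rw [Finset.prod_const]

include hXm in
lemma atom_measurableSet (s A : Finset ℕ) : MeasurableSet (atom X s A) := by
  rw [atom_eq]
  exact MeasurableSet.biInter s.countable_toSet
    (fun v _ => hXm v (measurableSet_singleton _))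

/-- the good configurations -/
def good (s : Finset ℕ) (c : ℤ) : Finset (Finset ℕ) :=
  s.powerset.filter (fun A => Int.sign (2 * (A.card : ℤ) - s.card) = c)

lemma sum_pm {s A : Finset ℕ} (hA : A ⊆ s) :
    ∑ v ∈ s, (if v ∈ A then (1:ℤ) else -1) = 2 * (A.card : ℤ) - s.card := by
  have : ∀ v ∈ s, (if v ∈ A then (1:ℤ) else -1) = 2 * (if v ∈ A then 1 else 0) - 1 := by
    intro v _; by_cases h : v ∈ A <;> simp [h]
  rw [Finset.sum_congr rfl this, Finset.sum_sub_distrib, ← Finset.mul_sum,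
    Finset.sum_ite_mem, Finset.sum_const, Finset.sum_const]
  rw [Finset.inter_eq_right.mpr hA]
  simp [mul_comm]

lemma Gev_eq_biUnion (s : Finset ℕ) (c : ℤ) :
    Gev X s c = ⋃ A ∈ good s c, atom X s A := by
  ext ω
  simp only [Gev, good, Set.mem_setOf_eq, Set.mem_iUnion, Finset.mem_filter,
    Finset.mem_powerset, exists_prop]
  constructor
  · rintro ⟨h1, h2⟩
    refine ⟨s.filter (fun v => X v ω = 1), ⟨Finset.filter_subset _ _, ?_⟩, ?_⟩
    · rw [← sum_pm (Finset.filter_subset _ s)]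
      rw [← h2]
      congr 1
      apply Finset.sum_congr rfl
      intro v hv
      by_cases h : X v ω = 1
      · simp [Finset.mem_filter, hv, h]
      · rcases h1 v hv with h' | h'
        · exact absurd h' h
        · simp [Finset.mem_filter, hv, h, h']
    · intro v hv
      by_cases h : X v ω = 1
      · simp [Finset.mem_filter, hv, h]
      · rcases h1 v hv with h' | h'
        · exact absurd h' h
        · simp [Finset.mem_filter, hv, h, h']
  · rintro ⟨A, ⟨hA, hsign⟩, hatom⟩
    constructor
    · intro v hv
      rw [hatom v hv]
      by_cases h : v ∈ A <;> simp [h]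
    · rw [Finset.sum_congr rfl (fun v hv => hatom v hv), sum_pm hA, hsign]

lemma atoms_disjoint (s : Finset ℕ) (c : ℤ) :
    Set.PairwiseDisjoint (↑(good s c)) (atom X s ·) := by
  intro A hA A' hA' hne
  simp only [Finset.coe_filter, good, Set.mem_setOf_eq, Finset.mem_powerset] at hA hA'
  rw [Function.onFun, Set.disjoint_left]
  intro ω h1 h2
  apply hne
  ext v
  constructor
  · intro hv
    by_contra hv'
    have hvs : v ∈ s := hA.1 hv
    have e1 := h1 v hvs
    have e2 := h2 v hvs
    rw [if_pos hv] at e1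
    rw [if_neg hv'] at e2
    rw [e1] at e2
    exact absurd e2 (by decide)
  · intro hv
    by_contra hv'
    have hvs : v ∈ s := hA'.1 hv
    have e1 := h1 v hvs
    have e2 := h2 v hvs
    rw [if_neg hv'] at e1
    rw [if_pos hv] at e2
    rw [e1] at e2
    exact absurd e2 (by decide)

lemma good_card_eq (s : Finset ℕ) : (good s 1).card = (good s (-1)).card := by
  apply Finset.card_bij' (fun A _ => s \ A) (fun A _ => s \ A)
  · intro A hA
    simp only [good, Finset.mem_filter, Finset.mem_powerset] at hA ⊢
    have hsub := hA.1
    have hc : A.card ≤ s.card := Finset.card_le_card hsub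
    have hcard : (s \ A).card = s.card - A.card := Finset.card_sdiff_of_subset hsub
    have hsign := hA.2
    have hgt : (s.card : ℤ) < 2 * A.card := by
      by_contra hle
      push_neg at hle
      rcases lt_or_eq_of_le hle with h | h
      · rw [Int.sign_eq_neg_one_of_neg (by omega)] at hsign; exact absurd hsign (by decide)
      · rw [h] at hsign; simp at hsign
    refine ⟨Finset.sdiff_subset, ?_⟩
    rw [hcard]
    apply Int.sign_eq_neg_one_of_neg
    push_cast [hc]
    omega
  · intro A hA
    simp only [good, Finset.mem_filter, Finset.mem_powerset] at hA ⊢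
    have hsub := hA.1
    have hc : A.card ≤ s.card := Finset.card_le_card hsub
    have hcard : (s \ A).card = s.card - A.card := Finset.card_sdiff_of_subset hsub
    have hsign := hA.2
    have hlt : 2 * (A.card : ℤ) < s.card := by
      by_contra hle
      push_neg at hle
      rcases lt_or_eq_of_le hle with h | h
      · rw [Int.sign_eq_one_of_pos (by omega)] at hsign; exact absurd hsign (by decide)
      · rw [← h] at hsign; simp at hsign
    refine ⟨Finset.sdiff_subset, ?_⟩
    rw [hcard]
    apply Int.sign_eq_one_of_pos
    push_cast [hc]
    omega
  · intro A hA
    simp only [good, Finset.mem_filter, Finset.mem_powerset] at hA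
    exact Finset.sdiff_sdiff_eq_self hA.1
  · intro A hA
    simp only [good, Finset.mem_filter, Finset.mem_powerset] at hA
    exact Finset.sdiff_sdiff_eq_self hA.1

lemma good_card_add (s : Finset ℕ) (hodd : Odd s.card) :
    (good s 1).card + (good s (-1)).card = 2 ^ s.card := by
  have hdisj : Disjoint (good s 1) (good s (-1)) := by
    rw [Finset.disjoint_left]
    intro A h1 h2
    simp only [good, Finset.mem_filter] at h1 h2
    rw [h1.2] at h2
    exact absurd h2.2 (by decide)
  have hunion : good s 1 ∪ good s (-1) = s.powerset := by
    apply Finset.Subset.antisymm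
    · apply Finset.union_subset <;> exact Finset.filter_subset _ _
    · intro A hA
      have hc : A.card ≤ s.card := Finset.card_le_card (Finset.mem_powerset.1 hA)
      have hne : 2 * (A.card : ℤ) - s.card ≠ 0 := by
        obtain ⟨k, hk⟩ := hodd
        intro h
        omega
      rcases lt_trichotomy (2 * (A.card : ℤ) - s.card) 0 with h | h | h
      · apply Finset.mem_union_right
        simp only [good, Finset.mem_filter]
        exact ⟨hA, Int.sign_eq_neg_one_of_neg h⟩
      · exact absurd h hne
      · apply Finset.mem_union_left
        simp only [good, Finset.mem_filter]
        exact ⟨hA, Int.sign_eq_one_of_pos h⟩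
  rw [← Finset.card_union_of_disjoint hdisj, hunion, Finset.card_powerset]

include hXm hXi hXu in
lemma Gev_meas {s : Finset ℕ} (hodd : Odd s.card) {c : ℤ} (hc : c = 1 ∨ c = -1) :
    μ (Gev X s c) = 2⁻¹ := by
  have hG : ∀ c' : ℤ, μ (Gev X s c') = ((good s c').card : ℝ≥0∞) * 2⁻¹ ^ s.card := by
    intro c'
    rw [Gev_eq_biUnion, measure_biUnion_finset (atoms_disjoint s c')
      (fun A _ => atom_measurableSet hXm s A)]
    rw [Finset.sum_congr rfl (fun A _ => atom_meas hXi hXu s A), Finset.sum_const,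
      nsmul_eq_mul]
  have h2 : μ (Gev X s 1) = μ (Gev X s (-1)) := by
    rw [hG 1, hG (-1), good_card_eq]
  have hsum : μ (Gev X s 1) + μ (Gev X s (-1)) = 1 := by
    rw [hG 1, hG (-1), ← add_mul, ← Nat.cast_add, good_card_add s hodd]
    rw [Nat.cast_pow, Nat.cast_ofNat, ← mul_pow,
      ENNReal.mul_inv_cancel (by norm_num) (by norm_num), one_pow]
  have h1 : μ (Gev X s 1) = 2⁻¹ := by
    rw [← h2, ← two_mul] at hsum
    have := (ENNReal.eq_div_iff (by norm_num) (by norm_num)).2 hsum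
    rw [this, one_div]
  rcases hc with rfl | rfl
  · exact h1
  · rw [← h2]; exact h1

/-- the target set in the tuple space -/
def Q (s : Finset ℕ) (c : ℤ) : Set ({v // v ∈ s} → ℤ) :=
  {g | (∀ i, g i = 1 ∨ g i = -1) ∧ Int.sign (∑ i, g i) = c}

lemma Q_finite (s : Finset ℕ) (c : ℤ) : (Q s c).Finite := by
  apply Set.Finite.subset (Set.Finite.pi (fun _ : {v // v ∈ s} =>
    (Set.finite_singleton (1:ℤ)).union (Set.finite_singleton (-1))))
  intro g hg
  rw [Set.mem_pi]
  intro i _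
  rcases hg.1 i with h | h <;> simp [h]

lemma Q_measurableSet (s : Finset ℕ) (c : ℤ) : MeasurableSet (Q s c) := by
  have : Q s c = ⋃ g ∈ Q s c, {g} := by simp
  rw [this]
  apply Set.Finite.measurableSet_biUnion (Q_finite s c)
  intro g _
  have : ({g} : Set ({v // v ∈ s} → ℤ)) = ⋂ i, (fun h => h i) ⁻¹' {g i} := by
    ext h; simp [funext_iff]
  rw [this]
  exact MeasurableSet.iInter (fun i => measurable_pi_apply i (measurableSet_singleton _))

lemma Gev_eq_preimage (s : Finset ℕ) (c : ℤ) :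
    Gev X s c = (fun ω (i : {v // v ∈ s}) => X i ω) ⁻¹' Q s c := by
  ext ω
  simp only [Gev, Q, Set.mem_preimage, Set.mem_setOf_eq, Subtype.forall]
  rw [Finset.sum_coe_sort s (fun v => X v ω)]

include hXm hXi hXu in
lemma iInter_Gev_meas (K : ℕ) (Bl : ℕ → Finset ℕ)
    (hodd : ∀ j, Odd (Bl j).card)
    (hdisj : ∀ i j, i < j → Disjoint (Bl i) (Bl j))
    {c : ℤ} (hc : c = 1 ∨ c = -1) :
    μ (⋂ j ∈ Finset.range K, Gev X (Bl j) c) = 2⁻¹ ^ K := by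
  induction K with
  | zero => simp
  | succ K ih =>
    have hrange : Finset.range (K+1) = insert K (Finset.range K) := by
      rw [Finset.range_add_one]
    rw [hrange, Finset.set_biInter_insert, Set.inter_comm]
    set S : Finset ℕ := (Finset.range K).biUnion Bl with hS
    have hsub : ∀ j ∈ Finset.range K, Bl j ⊆ S :=
      fun j hj => Finset.subset_biUnion_of_mem Bl hj
    have hST : Disjoint S (Bl K) := by
      rw [Finset.disjoint_biUnion_left]
      intro j hj
      exact hdisj j K (Finset.mem_range.1 hj)
    have hIF := hXi.indepFun_finset S (Bl K) hST hXm
    -- restriction maps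
    set QS : Set ({v // v ∈ S} → ℤ) :=
      ⋂ j, ⋂ (hj : j ∈ Finset.range K),
        (fun (g : {v // v ∈ S} → ℤ) (i : {v // v ∈ Bl j}) => g ⟨i.1, hsub j hj i.2⟩)
          ⁻¹' Q (Bl j) c with hQS
    have hQSm : MeasurableSet QS := by
      apply MeasurableSet.iInter; intro j
      apply MeasurableSet.iInter; intro hj
      exact (measurable_pi_lambda _ (fun i => measurable_pi_apply _)) (Q_measurableSet _ _)
    have hbig : (⋂ j ∈ Finset.range K, Gev X (Bl j) c)
        = (fun ω (i : {v // v ∈ S}) => X i ω) ⁻¹' QS := by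
      rw [hQS]
      ext ω
      simp only [Set.mem_iInter, Set.mem_preimage]
      apply forall_congr'
      intro j
      apply forall_congr'
      intro hj
      rw [Gev_eq_preimage]
      rfl
    rw [hbig, Gev_eq_preimage]
    rw [hIF.measure_inter_preimage_eq_mul QS (Q (Bl K) c) hQSm (Q_measurableSet _ _)]
    rw [← hbig, ← Gev_eq_preimage, ih, Gev_meas hXm hXi hXu (hodd K) hc]
    rw [pow_succ]

end Prob

end MajorityCE

open MajorityCE Filter

/-- **An infinite graph without the almost sure period two property.**
There is a countably infinite, locally finite graph — presented through its
tie-adjusted neighborhoods `N : ℕ → Finset ℕ` (symmetric off the diagonal,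
every `|N v|` odd) — such that for i.i.d. uniform `{-1,+1}` initial opinions,
the majority dynamics almost surely fails to be eventually `2`-periodic at
some vertex. -/
theorem exists_graph_without_as_period_two :
    ∃ N : ℕ → Finset ℕ,
      (∀ u v : ℕ, u ≠ v → (u ∈ N v ↔ v ∈ N u)) ∧
      (∀ v : ℕ, Odd (N v).card) ∧
      ∀ (Ω : Type) (mΩ : MeasurableSpace Ω) (μ : Measure Ω),
        IsProbabilityMeasure μ →
        ∀ X : ℕ → Ω → ℤ,
          (∀ v, Measurable (X v)) →
          iIndepFun X μ →
          (∀ v : ℕ, μ (X v ⁻¹' {1}) = 1 / 2 ∧ μ (X v ⁻¹' {-1}) = 1 / 2) →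
          ∀ x : ℕ → ℕ → Ω → ℤ,
            (∀ (v : ℕ) (ω : Ω), x 0 v ω = X v ω) →
            (∀ (t v : ℕ) (ω : Ω),
              x (t + 1) v ω = Int.sign (∑ u ∈ N v, x t u ω)) →
            ∃ v : ℕ,
              μ {ω | ∃ T : ℕ, ∀ t ≥ T, x (t + 2) v ω = x t v ω} = 0 := by
  refine ⟨Nb, Nb_symm, card_Nb_odd, ?_⟩
  intro Ω mΩ μ hμ X hXm hXi hXu x hx0 hxs
  refine ⟨0, ?_⟩
  set Ω₀ : Set Ω := {ω | ∀ v, X v ω = 1 ∨ X v ω = -1} with hΩ₀def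
  have hΩ₀c : μ Ω₀ᶜ = 0 := by
    have : Ω₀ᶜ ⊆ ⋃ v, (X v ⁻¹' {1} ∪ X v ⁻¹' {-1})ᶜ := by
      intro ω hω
      rw [hΩ₀def, Set.mem_compl_iff, Set.mem_setOf_eq] at hω
      push_neg at hω
      obtain ⟨v, hv1, hv2⟩ := hω
      exact Set.mem_iUnion.2 ⟨v, by simp [hv1, hv2]⟩
    refine measure_mono_null this (measure_iUnion_null fun v => ?_)
    have hmeas : MeasurableSet (X v ⁻¹' {1} ∪ X v ⁻¹' {-1}) :=
      (hXm v (measurableSet_singleton _)).union (hXm v (measurableSet_singleton _))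
    rw [prob_compl_eq_zero_iff hmeas]
    have hdisj : Disjoint (X v ⁻¹' {1}) (X v ⁻¹' {-1}) := by
      rw [Set.disjoint_left]
      intro ω h1 h2
      simp only [Set.mem_preimage, Set.mem_singleton_iff] at h1 h2
      rw [h1] at h2; exact absurd h2 (by decide)
    rw [measure_union hdisj (hXm v (measurableSet_singleton _)), (hXu v).1, (hXu v).2,
      ENNReal.add_halves]
  have hmain : {ω | ∃ T : ℕ, ∀ t ≥ T, x (t + 2) 0 ω = x t 0 ω}
      = ⋃ T : ℕ, {ω | ∀ t ≥ T, x (t + 2) 0 ω = x t 0 ω} := by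
    ext ω; simp
  rw [hmain]
  refine measure_iUnion_null fun T => ?_
  set E : Set Ω := {ω | ∀ t ≥ T, x (t + 2) 0 ω = x t 0 ω} with hEdef
  have hbound : ∀ K : ℕ, μ E ≤ 2⁻¹ ^ K + 2⁻¹ ^ K := by
    intro K
    set Bl : ℕ → Finset ℕ := fun j => B (T + 1 + 6 * j) with hBl
    have hodd : ∀ j, Odd (Bl j).card := fun j => card_B_odd (by omega)
    have hdisjB : ∀ i j, i < j → Disjoint (Bl i) (Bl j) := by
      intro i j hij
      rw [hBl]
      simp only [B_def, Finset.disjoint_left, Finset.mem_Ico]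
      rintro a ⟨_, h2⟩ ⟨h3, _⟩
      have : start ((T + 1 + 6 * i) + 2) ≤ start ((T + 1 + 6 * j) - 1) :=
        start_mono (by omega)
      omega
    have hsubset : E ∩ Ω₀ ⊆ (⋂ j ∈ Finset.range K, Gev X (Bl j) 1)
        ∪ (⋂ j ∈ Finset.range K, Gev X (Bl j) (-1)) := by
      rintro ω ⟨hper, hω⟩
      rw [hΩ₀def, Set.mem_setOf_eq] at hω
      rw [hEdef, Set.mem_setOf_eq] at hper
      have hkey : ∀ k, x (T + 2 * k + 2) 0 ω = x (T + 2) 0 ω := by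
        intro k
        induction k with
        | zero => rfl
        | succ k ih =>
          have h1 : T + 2 * (k+1) + 2 = (T + 2 * k + 2) + 2 := by omega
          rw [h1, hper (T + 2 * k + 2) (by omega), ih]
      have hsig : ∀ k, Int.sign (∑ u ∈ B (T + 1 + 2 * k), X u ω) = x (T + 2) 0 ω := by
        intro k
        rw [← time1_eq X x hx0 hxs ω hω (T + 1 + 2 * k) (by omega)]
        have h1 : T + 1 + 2 * k = (T + 2 * k) + 1 := by omega
        rw [h1, ← vertex0_eq X x hx0 hxs ω hω (T + 2 * k)]
        have h2 : T + 2 * k + 2 = (T + 2 * k) + 2 := by omega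
        rw [← h2, hkey k]
      have hmem : ∀ j, ω ∈ Gev X (Bl j) (x (T + 2) 0 ω) := by
        intro j
        refine ⟨fun v _ => hω v, ?_⟩
        have h3 : T + 1 + 6 * j = T + 1 + 2 * (3 * j) := by omega
        rw [hBl]
        simp only
        rw [h3]
        exact hsig (3 * j)
      rcases values X x hx0 hxs ω hω (T + 2) 0 with hc | hc
      · left
        refine Set.mem_iInter₂.2 fun j _ => ?_
        rw [← hc]; exact hmem j
      · right
        refine Set.mem_iInter₂.2 fun j _ => ?_
        rw [← hc]; exact hmem j
    calc μ E ≤ μ ((E ∩ Ω₀) ∪ Ω₀ᶜ) := measure_mono (by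
          intro ω hω
          by_cases h : ω ∈ Ω₀
          · exact Or.inl ⟨hω, h⟩
          · exact Or.inr h)
      _ ≤ μ (E ∩ Ω₀) + μ Ω₀ᶜ := measure_union_le _ _
      _ = μ (E ∩ Ω₀) := by rw [hΩ₀c, add_zero]
      _ ≤ μ ((⋂ j ∈ Finset.range K, Gev X (Bl j) 1)
            ∪ (⋂ j ∈ Finset.range K, Gev X (Bl j) (-1))) := measure_mono hsubset
      _ ≤ μ (⋂ j ∈ Finset.range K, Gev X (Bl j) 1)
            + μ (⋂ j ∈ Finset.range K, Gev X (Bl j) (-1)) := measure_union_le _ _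
      _ = 2⁻¹ ^ K + 2⁻¹ ^ K := by
          rw [iInter_Gev_meas hXm hXi hXu K Bl hodd hdisjB (Or.inl rfl),
            iInter_Gev_meas hXm hXi hXu K Bl hodd hdisjB (Or.inr rfl)]
  have htend : Tendsto (fun K : ℕ => (2⁻¹ : ℝ≥0∞) ^ K + 2⁻¹ ^ K) atTop (nhds 0) := by
    have h := ENNReal.tendsto_pow_atTop_nhds_zero_of_lt_one
      (by norm_num : (2⁻¹ : ℝ≥0∞) < 1)
    have := h.add h
    simpa using this
  have := ge_of_tendsto' htend hbound
  exact le_antisymm this zero_le
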